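/- Let f be a log-concave density with CDF F. For any a < b in the support, f(b) ≤ f(a) + (F(b) - F(a))·f'(a)/f(a). -/

import Mathlib

open MeasureTheory Set intervalIntegral

/-- Let `f` be a continuously differentiable, strictly positive (on its open
convex support `S`) log-concave density with CDF `F`. For any `a < b` in the
support, `f b ≤ f a + (F b - F a) · f'(a)/f a`. -/
theorem stmt6 (f F : ℝ → ℝ) (S : Set ℝ) (hS : Convex ℝ S) (hSo : IsOpen S)
    (hf : ContDiff ℝ 1 f) (hpos : ∀ x ∈ S, 0 < f x) (hf0 : ∀ x, 0 ≤ f x)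
    (hint : MeasureTheory.Integrable f) (hnorm : ∫ x, f x = 1)
    (hlc : ConcaveOn ℝ S (fun x => Real.log (f x)))
    (hF : ∀ x, F x = ∫ t in Set.Iic x, f t)
    (a b : ℝ) (ha : a ∈ S) (hb : b ∈ S) (hab : a < b) :
    f b ≤ f a + (F b - F a) * deriv f a / f a := by
  have hfd : Differentiable ℝ f := hf.differentiable one_ne_zero
  have hfc : Continuous f := hfd.continuous
  have hfd' : Continuous (deriv f) := hf.continuous_deriv le_rfl
  have hIcc : Icc a b ⊆ S := hS.ordConnected.out ha hb
  -- derivative of log ∘ f on S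
  have hlog : ∀ x ∈ S, deriv (fun y => Real.log (f y)) x = deriv f x / f x := by
    intro x hx
    have : HasDerivAt (fun y => Real.log (f y)) ((f x)⁻¹ * deriv f x) x :=
      (Real.hasDerivAt_log (hpos x hx).ne').comp x (hfd x).hasDerivAt
    rw [this.deriv]; ring
  have hanti : AntitoneOn (deriv (fun y => Real.log (f y))) S :=
    hlc.antitoneOn_deriv (fun x hx =>
      ((Real.differentiableAt_log (hpos x hx).ne').comp x (hfd x)))
  have key : ∀ x ∈ Icc a b, deriv f x ≤ f x * (deriv f a / f a) := by
    intro x hx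
    have hxS : x ∈ S := hIcc hx
    have h1 : deriv f x / f x ≤ deriv f a / f a := by
      rw [← hlog x hxS, ← hlog a ha]
      exact hanti ha hxS hx.1
    have hfx := hpos x hxS
    calc deriv f x = f x * (deriv f x / f x) := by field_simp
      _ ≤ f x * (deriv f a / f a) := by
          exact mul_le_mul_of_nonneg_left h1 hfx.le
  -- FTC
  have hderint : IntervalIntegrable (deriv f) volume a b :=
    hfd'.intervalIntegrable a b
  have hftc : (∫ x in a..b, deriv f x) = f b - f a :=
    intervalIntegral.integral_deriv_eq_sub (fun x _ => hfd x) hderint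
  have hfint : IntervalIntegrable f volume a b := hfc.intervalIntegrable a b
  have hmono : (∫ x in a..b, deriv f x) ≤ ∫ x in a..b, f x * (deriv f a / f a) := by
    apply intervalIntegral.integral_mono_on hab.le hderint
      (hfint.mul_const _)
    intro x hx; exact key x hx
  have hFab : F b - F a = ∫ x in a..b, f x := by
    rw [hF a, hF b]
    exact integral_Iic_sub_Iic hint.integrableOn hint.integrableOn
  have : f b - f a ≤ (F b - F a) * (deriv f a / f a) := by
    rw [← hftc, hFab]
    simpa [intervalIntegral.integral_mul_const] using hmono
  have hfa := hpos a ha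
  rw [mul_div_assoc]; linarith
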